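/- Let z be a divergence direction of a series ∑xₙ of nonzero vectors tending to zero in a finite-dimensional real inner product space X, let X₀ be a linear subspace containing z, and let pr₁ be the orthogonal projection onto the orthogonal complement of X₀. Then there exists a set Ω_z ⊆ ℕ such that (1) ∑_{n∈Ω_z} ‖pr₁(xₙ)‖ < ∞, and (2) for every neighborhood U of z in the unit sphere S, the series ∑_{n∈Ω_z∩ℕ_U} ‖xₙ‖ diverges. -/

import Mathlib

open Filter Topology

/-- `z` is a divergence direction of the series `∑ x n`. -/
def IsDivergenceDirection {X : Type*} [NormedAddCommGroup X] [InnerProductSpace ℝ X]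
    (x : ℕ → X) (z : X) : Prop :=
  ‖z‖ = 1 ∧ ∀ ε : ℝ, 0 < ε →
    {n : ℕ | dist (‖x n‖⁻¹ • x n) z < ε}.Infinite ∧
    ¬ Summable (fun n : {n : ℕ | dist (‖x n‖⁻¹ • x n) z < ε} => ‖x (n : ℕ)‖)

theorem stmt5
    {X : Type*} [NormedAddCommGroup X] [InnerProductSpace ℝ X] [FiniteDimensional ℝ X]
    (x : ℕ → X) (hx : ∀ n, x n ≠ 0) (hx0 : Tendsto x atTop (𝓝 0))
    (z : X) (hz : IsDivergenceDirection x z)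
    (X₀ : Submodule ℝ X) (hzX₀ : z ∈ X₀) :
    ∃ Ω : Set ℕ,
      Summable (fun n : Ω => ‖(X₀ᗮ.orthogonalProjectionOnto (x (n : ℕ)) : X)‖) ∧
      ∀ ε : ℝ, 0 < ε →
        ¬ Summable (fun n : ↥(Ω ∩ {n : ℕ | dist (‖x n‖⁻¹ • x n) z < ε}) =>
          ‖x (n : ℕ)‖) := by
  classical
  obtain ⟨hz1, hz2⟩ := hz
  set u : ℕ → X := fun n => ‖x n‖⁻¹ • x n with hu
  set pr : ℕ → ℝ := fun n => ‖(X₀ᗮ.orthogonalProjectionOnto (x n) : X)‖ with hprdef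
  have hpr0 : ∀ n, 0 ≤ pr n := fun n => norm_nonneg _
  -- projection of z is zero
  have hprz : (X₀ᗮ.orthogonalProjectionOnto z : X₀ᗮ) = 0 :=
    Submodule.orthogonalProjectionOnto_apply_of_mem_orthogonal
      (X₀.le_orthogonal_orthogonal hzX₀)
  -- key estimate
  have key : ∀ (ε : ℝ) (n : ℕ), dist (u n) z < ε → pr n ≤ ε * ‖x n‖ := by
    intro ε n hn
    have hxn : ‖x n‖ ≠ 0 := norm_ne_zero_iff.mpr (hx n)
    have hxeq : x n = ‖x n‖ • u n := by
      rw [hu]; simp [smul_smul, mul_inv_cancel₀ hxn]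
    have h1 : (X₀ᗮ.orthogonalProjectionOnto (x n) : X₀ᗮ)
        = ‖x n‖ • (X₀ᗮ.orthogonalProjectionOnto (u n)) := by
      conv_lhs => rw [hxeq]
      rw [map_smul]
    have h2 : ‖(X₀ᗮ.orthogonalProjectionOnto (u n) : X₀ᗮ)‖ ≤ ε := by
      have h3 : (X₀ᗮ.orthogonalProjectionOnto (u n) : X₀ᗮ)
          = X₀ᗮ.orthogonalProjectionOnto (u n - z) := by
        rw [map_sub, hprz, sub_zero]
      rw [h3]
      calc ‖X₀ᗮ.orthogonalProjectionOnto (u n - z)‖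
          ≤ ‖X₀ᗮ.orthogonalProjectionOnto‖ * ‖u n - z‖ :=
            (X₀ᗮ.orthogonalProjectionOnto).le_opNorm _
        _ ≤ 1 * ‖u n - z‖ := by
            apply mul_le_mul_of_nonneg_right (Submodule.orthogonalProjectionOnto_norm_le _) (norm_nonneg _)
        _ = dist (u n) z := by rw [one_mul, dist_eq_norm]
        _ ≤ ε := hn.le
    have : pr n = ‖x n‖ * ‖(X₀ᗮ.orthogonalProjectionOnto (u n) : X₀ᗮ)‖ := by
      rw [hprdef]
      show ‖((X₀ᗮ.orthogonalProjectionOnto) (x n) : X)‖ = _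
      rw [h1, Submodule.coe_smul, norm_smul, Real.norm_eq_abs,
        abs_of_nonneg (norm_nonneg _)]
      norm_cast
    rw [this, mul_comm]
    exact mul_le_mul_of_nonneg_right h2 (norm_nonneg _)
  -- step lemma: find a block with sum in [1,2]
  have step : ∀ (N : ℕ) (ε : ℝ), 0 < ε → ∃ F : Finset ℕ,
      (∀ n ∈ F, N ≤ n ∧ dist (u n) z < ε) ∧
      1 ≤ ∑ n ∈ F, ‖x n‖ ∧ ∑ n ∈ F, ‖x n‖ ≤ 2 := by
    intro N ε hε
    obtain ⟨M0, hM0⟩ := (Metric.tendsto_atTop.mp hx0 1 one_pos)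
    set M := max N M0 with hM
    set T : Set ℕ := {n | dist (u n) z < ε} ∩ Set.Ici M with hT
    set g : ℕ → ℝ := Set.indicator T (fun n => ‖x n‖) with hg
    have hg0 : ∀ n, 0 ≤ g n := fun n => Set.indicator_nonneg (fun _ _ => norm_nonneg _) n
    have hg1 : ∀ n, g n ≤ 1 := by
      intro n
      by_cases h : n ∈ T
      · rw [hg, Set.indicator_of_mem h]
        have : dist (x n) 0 < 1 := hM0 n (le_trans (le_max_right _ _) h.2)
        rw [dist_zero_right] at this
        exact this.le
      · rw [hg, Set.indicator_of_notMem h]; exact zero_le_one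
    have hgns : ¬ Summable g := by
      intro hgs
      apply (hz2 ε hε).2
      have hfin : Summable (Set.indicator ({n | dist (u n) z < ε} ∩ Set.Iio M)
          (fun n => ‖x n‖)) := by
        apply summable_of_finite_support
        apply Set.Finite.subset (Set.finite_Iio M)
        intro n hn
        rcases Set.mem_of_indicator_ne_zero hn with ⟨-, h2⟩
        exact h2
      have hsplit : ∀ n, Set.indicator {n | dist (u n) z < ε} (fun n => ‖x n‖) n
          = g n + Set.indicator ({n | dist (u n) z < ε} ∩ Set.Iio M) (fun n => ‖x n‖) n := by
        intro n
        rw [hg, hT]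
        simp only [Set.indicator_apply, Set.mem_inter_iff, Set.mem_setOf_eq, Set.mem_Ici,
          Set.mem_Iio]
        by_cases h1 : dist (u n) z < ε
        · rcases le_or_gt M n with h2 | h2
          · simp [h1, h2, not_lt.mpr h2]
          · simp [h1, h2, not_le.mpr h2]
        · simp [h1]
      exact (summable_subtype_iff_indicator (s := {n | dist (u n) z < ε})
        (f := fun n => ‖x n‖)).mpr (((hgs.add hfin)).congr (fun n => (hsplit n).symm))
    have hex : ∃ m, 1 < ∑ i ∈ Finset.range m, g i := by
      by_contra h
      push_neg at h
      exact hgns (summable_of_sum_range_le hg0 (fun m => (h m)))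
    set m0 := Nat.find hex with hm0
    have hm0spec : 1 < ∑ i ∈ Finset.range m0, g i := Nat.find_spec hex
    have hm0ne : m0 ≠ 0 := by
      intro h
      rw [h] at hm0spec
      norm_num at hm0spec
    obtain ⟨m1, hm1⟩ : ∃ m1, m0 = m1 + 1 := ⟨m0 - 1, (Nat.succ_pred_eq_of_ne_zero hm0ne).symm⟩
    have hmin : ¬ (1 < ∑ i ∈ Finset.range m1, g i) := Nat.find_min hex (by omega)
    push_neg at hmin
    have hub : ∑ i ∈ Finset.range m0, g i ≤ 2 := by
      rw [hm1, Finset.sum_range_succ]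
      have := hg1 m1
      linarith
    refine ⟨(Finset.range m0).filter (· ∈ T), ?_, ?_, ?_⟩
    · intro n hn
      rw [Finset.mem_filter] at hn
      exact ⟨le_trans (le_max_left _ _) hn.2.2, hn.2.1⟩
    all_goals {
      have hFsum : ∑ n ∈ (Finset.range m0).filter (· ∈ T), ‖x n‖
          = ∑ i ∈ Finset.range m0, g i := by
        rw [Finset.sum_filter]
        apply Finset.sum_congr rfl
        intro n _
        by_cases h : n ∈ T
        · rw [if_pos h, hg, Set.indicator_of_mem h]
        · rw [if_neg h, hg, Set.indicator_of_notMem h]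
      rw [hFsum]
      first
        | exact hm0spec.le
        | exact hub
    }
  choose G hG using step
  have hhalf : ∀ k : ℕ, (0:ℝ) < (1/2)^k := fun k => pow_pos (by norm_num) k
  -- recursive construction of blocks
  obtain ⟨p, hp0, hpS⟩ : ∃ p : ℕ → ℕ × Finset ℕ,
      p 0 = (0, G 0 ((1/2)^0) (hhalf 0)) ∧
      ∀ k, p (k+1) = (max (p k).1 ((p k).2.sup id) + 1,
        G (max (p k).1 ((p k).2.sup id) + 1) ((1/2)^(k+1)) (hhalf (k+1))) :=
    ⟨fun k => Nat.rec (0, G 0 ((1/2)^0) (hhalf 0))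
      (fun k q => (max q.1 (q.2.sup id) + 1,
        G (max q.1 (q.2.sup id) + 1) ((1/2)^(k+1)) (hhalf (k+1)))) k, rfl, fun _ => rfl⟩
  have hFspec : ∀ k, (∀ n ∈ (p k).2, (p k).1 ≤ n ∧ dist (u n) z < (1/2)^k) ∧
      1 ≤ ∑ n ∈ (p k).2, ‖x n‖ ∧ ∑ n ∈ (p k).2, ‖x n‖ ≤ 2 := by
    intro k
    cases k with
    | zero => rw [hp0]; exact hG 0 _ (hhalf 0)
    | succ k => rw [hpS k]; exact hG _ _ (hhalf (k+1))
  have hNmono : StrictMono (fun k => (p k).1) := by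
    apply strictMono_nat_of_lt_succ
    intro k
    rw [hpS k]
    exact Nat.lt_succ_of_le (le_max_left _ _)
  have hlt : ∀ k, ∀ n ∈ (p k).2, n < (p (k+1)).1 := by
    intro k n hn
    rw [hpS k]
    exact Nat.lt_succ_of_le (le_trans (Finset.le_sup (f := id) hn) (le_max_right _ _))
  have horder : ∀ j k, j < k → ∀ n ∈ (p j).2, ∀ m ∈ (p k).2, n < m := by
    intro j k hjk n hn m hm
    have h1 : n < (p (j+1)).1 := hlt j n hn
    have h2 : (p (j+1)).1 ≤ (p k).1 := hNmono.monotone hjk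
    have h3 : (p k).1 ≤ m := ((hFspec k).1 m hm).1
    omega
  have hdisj : ∀ j k, j ≠ k → Disjoint (p j).2 (p k).2 := by
    intro j k hjk
    rcases hjk.lt_or_gt with h | h
    · apply Finset.disjoint_left.mpr
      intro n hn hn'
      exact absurd rfl (horder j k h n hn n hn').ne
    · apply Finset.disjoint_left.mpr
      intro n hn hn'
      exact absurd rfl (horder k j h n hn' n hn).ne
  set Ω : Set ℕ := ⋃ k, ((p k).2 : Set ℕ) with hΩ
  have hmemk : ∀ k n, n ∈ (p k).2 → k ≤ n := fun k n hn =>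
    le_trans (hNmono.le_apply) ((hFspec k).1 n hn).1
  refine ⟨Ω, ?_, ?_⟩
  · -- summability of projections over Ω
    apply (summable_subtype_iff_indicator (s := Ω) (f := pr)).mpr
    apply summable_of_sum_range_le (c := 4)
      (fun n => Set.indicator_nonneg (fun i _ => hpr0 i) n)
    intro m
    have hsub : (Finset.range m).filter (· ∈ Ω) ⊆
        (Finset.range m).biUnion (fun k => (p k).2) := by
      intro n hn
      rw [Finset.mem_filter] at hn
      obtain ⟨hn1, hn2⟩ := hn
      rw [hΩ, Set.mem_iUnion] at hn2
      obtain ⟨k, hk⟩ := hn2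
      rw [Finset.mem_coe] at hk
      rw [Finset.mem_biUnion]
      refine ⟨k, Finset.mem_range.mpr ?_, hk⟩
      have := hmemk k n hk
      have := Finset.mem_range.mp hn1
      omega
    calc ∑ i ∈ Finset.range m, Set.indicator Ω pr i
        = ∑ i ∈ (Finset.range m).filter (· ∈ Ω), pr i := by
          rw [Finset.sum_filter]
          apply Finset.sum_congr rfl
          intro n _
          by_cases h : n ∈ Ω
          · rw [if_pos h, Set.indicator_of_mem h]
          · rw [if_neg h, Set.indicator_of_notMem h]
      _ ≤ ∑ i ∈ (Finset.range m).biUnion (fun k => (p k).2), pr i :=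
          Finset.sum_le_sum_of_subset_of_nonneg hsub (fun i _ _ => hpr0 i)
      _ = ∑ k ∈ Finset.range m, ∑ n ∈ (p k).2, pr n :=
          Finset.sum_biUnion (fun j _ k _ hjk => hdisj j k hjk)
      _ ≤ ∑ k ∈ Finset.range m, (1/2)^k * 2 := by
          apply Finset.sum_le_sum
          intro k _
          calc ∑ n ∈ (p k).2, pr n
              ≤ ∑ n ∈ (p k).2, (1/2)^k * ‖x n‖ := by
                apply Finset.sum_le_sum
                intro n hn
                exact key _ n ((hFspec k).1 n hn).2
            _ = (1/2)^k * ∑ n ∈ (p k).2, ‖x n‖ := by rw [Finset.mul_sum]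
            _ ≤ (1/2)^k * 2 :=
                mul_le_mul_of_nonneg_left (hFspec k).2.2 (hhalf k).le
      _ = 2 * ∑ k ∈ Finset.range m, (1/2)^k := by
          rw [Finset.mul_sum]
          apply Finset.sum_congr rfl
          intro k _; ring
      _ ≤ 2 * 2 := by
          have := sum_geometric_two_le m
          linarith
      _ = 4 := by norm_num
  · -- divergence part
    intro ε hε hsum
    set T : Set ℕ := Ω ∩ {n | dist (u n) z < ε} with hTdef
    have hind : Summable (Set.indicator T (fun n => ‖x n‖)) :=
      (summable_subtype_iff_indicator (s := T) (f := fun n => ‖x n‖)).mp hsum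
    obtain ⟨K, hK⟩ := exists_pow_lt_of_lt_one hε (by norm_num : (1/2 : ℝ) < 1)
    obtain ⟨m, hm⟩ := exists_nat_gt (∑' n, Set.indicator T (fun n => ‖x n‖) n)
    set B := (Finset.Ico K (K + m)).biUnion (fun k => (p k).2) with hB
    have hBsub : ∀ k ∈ Finset.Ico K (K + m), ∀ n ∈ (p k).2, n ∈ T := by
      intro k hk n hn
      rw [Finset.mem_Ico] at hk
      constructor
      · rw [hΩ, Set.mem_iUnion]
        exact ⟨k, Finset.mem_coe.mpr hn⟩
      · have h1 : dist (u n) z < (1/2)^k := ((hFspec k).1 n hn).2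
        have h2 : ((1:ℝ)/2)^k ≤ (1/2)^K :=
          pow_le_pow_of_le_one (by norm_num) (by norm_num) hk.1
        exact lt_of_lt_of_le h1 (le_trans h2 hK.le)
    have hBlow : (m : ℝ) ≤ ∑ n ∈ B, Set.indicator T (fun n => ‖x n‖) n := by
      rw [hB, Finset.sum_biUnion (fun j _ k _ hjk => hdisj j k hjk)]
      calc (m : ℝ) = ∑ _k ∈ Finset.Ico K (K + m), (1 : ℝ) := by
            rw [Finset.sum_const, Nat.card_Ico]
            simp
        _ ≤ ∑ k ∈ Finset.Ico K (K + m), ∑ n ∈ (p k).2,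
              Set.indicator T (fun n => ‖x n‖) n := by
            apply Finset.sum_le_sum
            intro k hk
            have heq : ∑ n ∈ (p k).2, Set.indicator T (fun n => ‖x n‖) n
                = ∑ n ∈ (p k).2, ‖x n‖ := by
              apply Finset.sum_congr rfl
              intro n hn
              rw [Set.indicator_of_mem (hBsub k hk n hn)]
            rw [heq]
            exact (hFspec k).2.1
    have hup : ∑ n ∈ B, Set.indicator T (fun n => ‖x n‖) n
        ≤ ∑' n, Set.indicator T (fun n => ‖x n‖) n :=
      Summable.sum_le_tsum B (fun i _ => Set.indicator_nonneg (fun j _ => norm_nonneg _) i) hind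
    linarith
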